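/- Let α, C > 0, let f : (0,1]² → ℝ be mixed α-Hölder with constant C with respect to the dyadic metrics, and let A : ℝ → ℝ be twice continuously differentiable. Let M₁ = sup of |A'| and M₂ = sup of |A''| on the closed interval [inf f, sup f] (which is compact since a mixed α-Hölder function on (0,1]² is bounded). Then the composition A∘f is mixed α-Hölder with respect to the dyadic metrics with constant C' = max(M₁ C, M₁ C + 2 M₂ C²). -/

import Mathlib

open MeasureTheory Set Filter

/-- The index `k` of the scale-`j` dyadic interval `(2^{-j} k, 2^{-j}(k+1)]` containing `x`. -/
noncomputable def dyadicIndex (j : ℕ) (x : ℝ) : ℤ := ⌈(2:ℝ) ^ j * x⌉ - 1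

/-- The scale-`j` dyadic interval `I^j_k = (2^{-j} k, 2^{-j}(k+1)]`. -/
noncomputable def dyadicInterval (j : ℕ) (k : ℤ) : Set ℝ :=
  Set.Ioc ((2:ℝ) ^ (-(j:ℤ)) * k) ((2:ℝ) ^ (-(j:ℤ)) * (k + 1))

/-- The dyadic averaging operator `P^j`:  `(P^j f)(x) = 2^j ∫_{I^j_k} f`, where `I^j_k` is the
scale-`j` dyadic interval containing `x`. -/
noncomputable def dyadicAvg (j : ℕ) (f : ℝ → ℝ) (x : ℝ) : ℝ :=
  (2:ℝ) ^ j * ∫ t in dyadicInterval j (dyadicIndex j x), f t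

/-- The dyadic metric on `(0,1]`:
`d(x,y) = inf { 2^{-j} : x and y lie in the same scale-j dyadic interval }` for `x ≠ y`,
and `d(x,x) = 0`. -/
noncomputable def dyadicDist (x y : ℝ) : ℝ :=
  if x = y then 0
  else sInf {r : ℝ | ∃ j : ℕ, r = (2:ℝ) ^ (-(j:ℤ)) ∧ dyadicIndex j x = dyadicIndex j y}

/-- `f` is `α`-Hölder with constant `C` on `(0,1]` with respect to the dyadic metric. -/
def HolderDyadic (α C : ℝ) (f : ℝ → ℝ) : Prop :=
  ∀ x ∈ Set.Ioc (0:ℝ) 1, ∀ y ∈ Set.Ioc (0:ℝ) 1, |f x - f y| ≤ C * dyadicDist x y ^ α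

/-- `g` is mixed `α`-Hölder with constant `C` on `(0,1]²` with respect to the dyadic metrics. -/
def MixedHolderDyadic (α C : ℝ) (g : ℝ → ℝ → ℝ) : Prop :=
  ∀ x ∈ Set.Ioc (0:ℝ) 1, ∀ y ∈ Set.Ioc (0:ℝ) 1, ∀ x' ∈ Set.Ioc (0:ℝ) 1, ∀ y' ∈ Set.Ioc (0:ℝ) 1,
    |g y x' - g x x'| ≤ C * dyadicDist x y ^ α ∧
    |g x y' - g x x'| ≤ C * dyadicDist x' y' ^ α ∧
    |g y y' - g x y' - g y x' + g x x'| ≤ C * (dyadicDist x y ^ α * dyadicDist x' y' ^ α)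

/-- Dyadic averaging at scale `j` in the first variable. -/
noncomputable def avgFst (j : ℕ) (g : ℝ → ℝ → ℝ) (x x' : ℝ) : ℝ := dyadicAvg j (fun t => g t x') x

/-- Dyadic averaging at scale `j'` in the second variable. -/
noncomputable def avgSnd (j' : ℕ) (g : ℝ → ℝ → ℝ) (x x' : ℝ) : ℝ := dyadicAvg j' (fun t => g x t) x'

/-- The double averaging operator `P^j P'^{j'}`. -/
noncomputable def avg2 (j j' : ℕ) (g : ℝ → ℝ → ℝ) : ℝ → ℝ → ℝ := avgFst j (avgSnd j' g)

/-- The mixed martingale difference `Δ_j Δ'_{j'} g`. -/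
noncomputable def mixedDiff (j j' : ℕ) (g : ℝ → ℝ → ℝ) (x x' : ℝ) : ℝ :=
  avg2 (j+1) (j'+1) g x x' - avg2 j (j'+1) g x x' - avg2 (j+1) j' g x x' + avg2 j j' g x x'

/-- `Δ_j P'^{j'} g`: martingale difference in the first variable, average in the second. -/
noncomputable def diffFstAvgSnd (j j' : ℕ) (g : ℝ → ℝ → ℝ) (x x' : ℝ) : ℝ :=
  avg2 (j+1) j' g x x' - avg2 j j' g x x'

/-- `P^j Δ'_{j'} g`: average in the first variable, martingale difference in the second. -/
noncomputable def avgFstDiffSnd (j j' : ℕ) (g : ℝ → ℝ → ℝ) (x x' : ℝ) : ℝ :=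
  avg2 j (j'+1) g x x' - avg2 j j' g x x'

/-- The (unnormalized) Haar function `ψ^j_k`: `+1` on the right half of `I^j_k`, `-1` on its
left half, `0` elsewhere. -/
noncomputable def haarFn (j : ℕ) (k : ℤ) (x : ℝ) : ℝ :=
  if x ∈ Set.Ioc ((2:ℝ) ^ (-(j:ℤ)) * k + (2:ℝ) ^ (-(j:ℤ) - 1)) ((2:ℝ) ^ (-(j:ℤ)) * (k + 1)) then 1
  else if x ∈ Set.Ioc ((2:ℝ) ^ (-(j:ℤ)) * k) ((2:ℝ) ^ (-(j:ℤ)) * k + (2:ℝ) ^ (-(j:ℤ) - 1)) then -1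
  else 0

/-- If `f` is mixed `α`-Hölder with constant `C` and `A` is `C²`, then `A ∘ f`
is mixed `α`-Hölder with constant `max(M₁ C, M₁ C + 2 M₂ C²)`, where `M₁` and `M₂` are the sups
of `|A'|` and `|A''|` on `[inf f, sup f]`. -/
lemma dyadicDist_nonneg (x y : ℝ) : 0 ≤ dyadicDist x y := by
  unfold dyadicDist
  split
  · exact le_refl 0
  · apply Real.sInf_nonneg
    rintro r ⟨j, rfl, -⟩
    positivity

lemma dyadicDist_le_one {x y : ℝ} (hx : x ∈ Set.Ioc (0:ℝ) 1) (hy : y ∈ Set.Ioc (0:ℝ) 1) :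
    dyadicDist x y ≤ 1 := by
  unfold dyadicDist
  split
  · norm_num
  · apply csInf_le
    · exact ⟨0, by rintro r ⟨j, rfl, -⟩; positivity⟩
    · refine ⟨0, by norm_num, ?_⟩
      have h1 : dyadicIndex 0 x = 0 := by
        simp only [dyadicIndex, pow_zero, one_mul, sub_eq_zero]
        exact_mod_cast Int.ceil_eq_iff.mpr ⟨by norm_num [hx.1], by exact_mod_cast hx.2⟩
      have h2 : dyadicIndex 0 y = 0 := by
        simp only [dyadicIndex, pow_zero, one_mul, sub_eq_zero]
        exact_mod_cast Int.ceil_eq_iff.mpr ⟨by norm_num [hy.1], by exact_mod_cast hy.2⟩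
      rw [h1, h2]

theorem composition_mixed_holder
    (α C : ℝ) (hα : 0 < α) (hC : 0 < C)
    (f : ℝ → ℝ → ℝ) (hf : MixedHolderDyadic α C f)
    (A : ℝ → ℝ) (hA : ContDiff ℝ 2 A) :
    MixedHolderDyadic α
      (max
        (sSup ((fun t => |deriv A t|) ''
            Set.Icc (sInf (Set.image2 f (Set.Ioc 0 1) (Set.Ioc 0 1)))
              (sSup (Set.image2 f (Set.Ioc 0 1) (Set.Ioc 0 1)))) * C)
        (sSup ((fun t => |deriv A t|) ''
            Set.Icc (sInf (Set.image2 f (Set.Ioc 0 1) (Set.Ioc 0 1)))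
              (sSup (Set.image2 f (Set.Ioc 0 1) (Set.Ioc 0 1)))) * C
          + 2 * sSup ((fun t => |deriv (deriv A) t|) ''
              Set.Icc (sInf (Set.image2 f (Set.Ioc 0 1) (Set.Ioc 0 1)))
                (sSup (Set.image2 f (Set.Ioc 0 1) (Set.Ioc 0 1)))) * C ^ 2))
      (fun x x' => A (f x x')) := by
  set S := Set.image2 f (Set.Ioc (0:ℝ) 1) (Set.Ioc (0:ℝ) 1) with hSdef
  set m := sInf S with hmdef
  set M := sSup S with hMdef
  set M₁ := sSup ((fun t => |deriv A t|) '' Set.Icc m M) with hM1def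
  set M₂ := sSup ((fun t => |deriv (deriv A) t|) '' Set.Icc m M) with hM2def
  -- regularity of A
  have hdf : Differentiable ℝ A := hA.differentiable (by norm_num)
  have h1 : ContDiff ℝ 1 (deriv A) :=
    (contDiff_succ_iff_deriv.mp (show ContDiff ℝ (1+1) A from hA)).2.2
  have hdA' : Differentiable ℝ (deriv A) := h1.differentiable (by norm_num)
  have hcA' : Continuous (deriv A) := h1.continuous
  have hcA'' : Continuous (deriv (deriv A)) := h1.continuous_deriv le_rfl
  have hone : (1:ℝ) ∈ Set.Ioc (0:ℝ) 1 := ⟨one_pos, le_refl 1⟩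
  -- basic dyadic facts
  have hD : ∀ {u v : ℝ}, u ∈ Set.Ioc (0:ℝ) 1 → v ∈ Set.Ioc (0:ℝ) 1 →
      0 ≤ dyadicDist u v ^ α ∧ dyadicDist u v ^ α ≤ 1 := by
    intro u v hu hv
    exact ⟨Real.rpow_nonneg (dyadicDist_nonneg _ _) α,
      Real.rpow_le_one (dyadicDist_nonneg _ _) (dyadicDist_le_one hu hv) hα.le⟩
  -- boundedness of the image
  have hSsub : S ⊆ Set.Icc (f 1 1 - 3*C) (f 1 1 + 3*C) := by
    rintro z ⟨u, hu, v, hv, rfl⟩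
    obtain ⟨K1, K2, K3⟩ := hf 1 hone u hu 1 hone v hv
    have d1 := hD hone hu
    have d2 := hD hone hv
    have hprod : dyadicDist 1 u ^ α * dyadicDist 1 v ^ α ≤ 1 := by
      nlinarith [d1.1, d1.2, d2.1, d2.2]
    have b1 : |f u 1 - f 1 1| ≤ C := K1.trans (mul_le_of_le_one_right hC.le d1.2)
    have b2 : |f 1 v - f 1 1| ≤ C := K2.trans (mul_le_of_le_one_right hC.le d2.2)
    have b3 : |f u v - f 1 v - f u 1 + f 1 1| ≤ C :=
      K3.trans (mul_le_of_le_one_right hC.le hprod)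
    constructor
    · nlinarith [abs_le.mp b1, abs_le.mp b2, abs_le.mp b3]
    · nlinarith [abs_le.mp b1, abs_le.mp b2, abs_le.mp b3]
  have hSne : S.Nonempty := ⟨f 1 1, Set.mem_image2_of_mem hone hone⟩
  have hbdd : BddAbove S := BddAbove.mono hSsub bddAbove_Icc
  have hbdd' : BddBelow S := BddBelow.mono hSsub bddBelow_Icc
  have hmem : ∀ u ∈ Set.Ioc (0:ℝ) 1, ∀ v ∈ Set.Ioc (0:ℝ) 1, f u v ∈ Set.Icc m M := by
    intro u hu v hv
    exact ⟨csInf_le hbdd' (Set.mem_image2_of_mem hu hv),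
      le_csSup hbdd (Set.mem_image2_of_mem hu hv)⟩
  have hmM : m ≤ M := csInf_le_csSup hSne hbdd' hbdd
  -- bounds on derivatives
  have hbd1 : ∀ t ∈ Set.Icc m M, |deriv A t| ≤ M₁ := by
    intro t ht
    exact le_csSup (isCompact_Icc.bddAbove_image hcA'.abs.continuousOn) ⟨t, ht, rfl⟩
  have hbd2 : ∀ t ∈ Set.Icc m M, |deriv (deriv A) t| ≤ M₂ := by
    intro t ht
    exact le_csSup (isCompact_Icc.bddAbove_image hcA''.abs.continuousOn) ⟨t, ht, rfl⟩
  have hM1nn : 0 ≤ M₁ := le_trans (abs_nonneg _) (hbd1 m ⟨le_rfl, hmM⟩)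
  have hM2nn : 0 ≤ M₂ := le_trans (abs_nonneg _) (hbd2 m ⟨le_rfl, hmM⟩)
  -- Lipschitz estimates on [m, M]
  have hlipA : ∀ u ∈ Set.Icc m M, ∀ v ∈ Set.Icc m M, |A v - A u| ≤ M₁ * |v - u| := by
    intro u hu v hv
    have := Convex.norm_image_sub_le_of_norm_deriv_le (f := A) (s := Set.Icc m M)
      (fun t _ => (hdf t)) (fun t ht => by simpa using hbd1 t ht) (convex_Icc m M) hu hv
    simpa [Real.norm_eq_abs] using this
  have hlipA' : ∀ u ∈ Set.Icc m M, ∀ v ∈ Set.Icc m M,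
      |deriv A v - deriv A u| ≤ M₂ * |v - u| := by
    intro u hu v hv
    have := Convex.norm_image_sub_le_of_norm_deriv_le (f := deriv A) (s := Set.Icc m M)
      (fun t _ => (hdA' t)) (fun t ht => by simpa using hbd2 t ht) (convex_Icc m M) hu hv
    simpa [Real.norm_eq_abs] using this
  -- main argument
  intro x hx y hy x' hx' y' hy'
  obtain ⟨H1, H2, H3⟩ := hf x hx y hy x' hx' y' hy'
  set a := f x x' with hadef
  set b := f y x' with hbdef
  set c := f x y' with hcdef
  set e := f y y' with hedef
  set D1 := dyadicDist x y ^ α with hD1def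
  set D2 := dyadicDist x' y' ^ α with hD2def
  obtain ⟨hD1nn, hD1le⟩ := hD hx hy
  obtain ⟨hD2nn, hD2le⟩ := hD hx' hy'
  have ha : a ∈ Set.Icc m M := hmem x hx x' hx'
  have hb : b ∈ Set.Icc m M := hmem y hy x' hx'
  have hc : c ∈ Set.Icc m M := hmem x hx y' hy'
  have he : e ∈ Set.Icc m M := hmem y hy y' hy'
  have hKmax1 : M₁ * C ≤ max (M₁ * C) (M₁ * C + 2 * M₂ * C ^ 2) := le_max_left _ _
  refine ⟨?_, ?_, ?_⟩
  · -- first variable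
    calc |A b - A a| ≤ M₁ * |b - a| := hlipA a ha b hb
      _ ≤ M₁ * (C * D1) := mul_le_mul_of_nonneg_left H1 hM1nn
      _ = (M₁ * C) * D1 := by ring
      _ ≤ max (M₁ * C) (M₁ * C + 2 * M₂ * C ^ 2) * D1 :=
          mul_le_mul_of_nonneg_right hKmax1 hD1nn
  · -- second variable
    calc |A c - A a| ≤ M₁ * |c - a| := hlipA a ha c hc
      _ ≤ M₁ * (C * D2) := mul_le_mul_of_nonneg_left H2 hM1nn
      _ = (M₁ * C) * D2 := by ring
      _ ≤ max (M₁ * C) (M₁ * C + 2 * M₂ * C ^ 2) * D2 :=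
          mul_le_mul_of_nonneg_right hKmax1 hD2nn
  · -- mixed difference
    have hder : ∀ t : ℝ, HasDerivAt (fun t => A (c + t * (e - c)) - A (a + t * (b - a)))
        (deriv A (c + t * (e - c)) * (e - c) - deriv A (a + t * (b - a)) * (b - a)) t := by
      intro t
      have k1 : HasDerivAt (fun t : ℝ => c + t * (e - c)) (e - c) t := by
        simpa using ((hasDerivAt_id t).mul_const (e - c)).const_add c
      have k2 : HasDerivAt (fun t : ℝ => a + t * (b - a)) (b - a) t := by
        simpa using ((hasDerivAt_id t).mul_const (b - a)).const_add a
      have c1 := ((hdf (c + t * (e - c))).hasDerivAt).comp t k1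
      have c2 := ((hdf (a + t * (b - a))).hasDerivAt).comp t k2
      exact c1.sub c2
    obtain ⟨τ, hτ, heq⟩ := exists_hasDerivAt_eq_slope
      (fun t => A (c + t * (e - c)) - A (a + t * (b - a)))
      (fun t => deriv A (c + t * (e - c)) * (e - c) - deriv A (a + t * (b - a)) * (b - a))
      one_pos
      (fun t _ => (hder t).continuousAt.continuousWithinAt)
      (fun t _ => hder t)
    rw [show c + (1:ℝ) * (e - c) = e by ring, show a + (1:ℝ) * (b - a) = b by ring,
      show c + (0:ℝ) * (e - c) = c by ring, show a + (0:ℝ) * (b - a) = a by ring] at heq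
    set u := c + τ * (e - c) with hudef
    set v := a + τ * (b - a) with hvdef
    have hkey : A e - A c - A b + A a = deriv A u * (e - c) - deriv A v * (b - a) := by
      rw [heq]; ring
    have hu : u ∈ Set.Icc m M := by
      simpa [smul_eq_mul] using
        (convex_Icc m M).add_smul_sub_mem hc he ⟨hτ.1.le, hτ.2.le⟩
    have hv : v ∈ Set.Icc m M := by
      simpa [smul_eq_mul] using
        (convex_Icc m M).add_smul_sub_mem ha hb ⟨hτ.1.le, hτ.2.le⟩
    have hτabs : |τ| ≤ 1 := by rw [abs_of_pos hτ.1]; exact hτ.2.le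
    have huv : |u - v| ≤ 2 * (C * D2) := by
      have huv_eq : u - v = (c - a) + τ * (e - c - b + a) := by rw [hudef, hvdef]; ring
      calc |u - v| ≤ |c - a| + |τ * (e - c - b + a)| := by rw [huv_eq]; exact abs_add_le _ _
        _ = |c - a| + |τ| * |e - c - b + a| := by rw [abs_mul]
        _ ≤ C * D2 + 1 * (C * (D1 * D2)) :=
            add_le_add H2 (mul_le_mul hτabs H3 (abs_nonneg _) one_pos.le)
        _ ≤ 2 * (C * D2) := by
            have h1' : D1 ≤ 1 := hD1le
            have h1nn : (0:ℝ) ≤ D1 := hD1nn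
            have h2nn : (0:ℝ) ≤ D2 := hD2nn
            nlinarith [mul_nonneg (mul_nonneg hC.le h2nn) (sub_nonneg.mpr h1')]
    calc |A e - A c - A b + A a|
        = |deriv A u * (e - c - b + a) + (deriv A u - deriv A v) * (b - a)| := by
          rw [hkey]; ring_nf
      _ ≤ |deriv A u| * |e - c - b + a| + |deriv A u - deriv A v| * |b - a| := by
          refine (abs_add_le _ _).trans ?_
          rw [abs_mul, abs_mul]
      _ ≤ M₁ * (C * (D1 * D2)) + (M₂ * (2 * (C * D2))) * (C * D1) := by
          refine add_le_add (mul_le_mul (hbd1 u hu) H3 (abs_nonneg _) hM1nn) ?_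
          refine mul_le_mul ((hlipA' v hv u hu).trans ?_) H1 (abs_nonneg _) (by positivity)
          exact mul_le_mul_of_nonneg_left huv hM2nn
      _ = (M₁ * C + 2 * M₂ * C ^ 2) * (D1 * D2) := by ring
      _ ≤ max (M₁ * C) (M₁ * C + 2 * M₂ * C ^ 2) * (D1 * D2) :=
          mul_le_mul_of_nonneg_right (le_max_right _ _) (mul_nonneg hD1nn hD2nn)
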